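/- Let $A$ be a C*-algebra, let $a, b \in A_+$, and let $\delta > 0$. If $a \precsim (b - \delta)_+$ (Cuntz subequivalence), then there exists a sequence $(v_n)_{n \in \mathbb{N}}$ in $A$ such that $\|a - v_n b v_n^*\| \to 0$ and $\|v_n\| \leq \|a\|^{1/2} \delta^{-1/2}$ for every $n$. -/

import Mathlib

open Filter Topology

/-- Cuntz subequivalence `a ≾ b` in a C*-algebra. -/
def CuntzLE {A : Type*} [NonUnitalCStarAlgebra A] (a b : A) : Prop :=
  ∃ v : ℕ → A, Tendsto (fun n => ‖a - v n * b * star (v n)‖) atTop (𝓝 0)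

/-- The cut-down `(a - ε)₊` via continuous functional calculus with `t ↦ max (t - ε) 0`. -/
noncomputable def posCut {A : Type*} [NonUnitalCStarAlgebra A] [PartialOrder A]
    [StarOrderedRing A] (a : A) (ε : ℝ) : A :=
  cfcₙ (fun t : ℝ => max (t - ε) 0) a

section Aux

variable {A : Type*} [NonUnitalCStarAlgebra A] [PartialOrder A] [StarOrderedRing A]

private noncomputable def gfun (δ : ℝ) : ℝ → ℝ := fun t => Real.sqrt (max (t - δ) 0 / t)

private lemma gfun_zero {δ : ℝ} (hδ : 0 < δ) : gfun δ 0 = 0 := by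
  simp [gfun]

private lemma gfun_cont {δ : ℝ} (hδ : 0 < δ) : Continuous (gfun δ) := by
  rw [continuous_iff_continuousAt]
  intro t
  rcases lt_or_ge t δ with ht | ht
  · have h : ∀ᶠ s in 𝓝 t, gfun δ s = 0 := by
      filter_upwards [Iio_mem_nhds ht] with s hs
      have : s - δ ≤ 0 := by simp only [Set.mem_Iio] at hs; linarith
      simp [gfun, max_eq_right this]
    exact Filter.EventuallyEq.continuousAt h
  · have ht0 : t ≠ 0 := ne_of_gt (hδ.trans_le ht)
    exact Real.continuous_sqrt.continuousAt.comp <|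
      ContinuousAt.div (by fun_prop) continuousAt_id ht0

private lemma key (a b : A) (ha : 0 ≤ a) (hb : 0 ≤ b) {δ : ℝ} (hδ : 0 < δ) (w : A) :
    ∃ v : A, ‖a - v * b * star v‖ ≤ 2 * ‖a - w * posCut b δ * star w‖ ∧
      ‖v‖ ≤ Real.sqrt ‖a‖ / Real.sqrt δ := by
  set g := gfun δ with hg_def
  have hgcont : Continuous g := gfun_cont hδ
  have hgc : ContinuousOn g (quasispectrum ℝ b) := hgcont.continuousOn
  have hg0 : g 0 = 0 := gfun_zero hδ
  have hbsa : IsSelfAdjoint b := .of_nonneg hb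
  have hqs : ∀ t ∈ quasispectrum ℝ b, 0 ≤ t := quasispectrum_nonneg_of_nonneg b hb
  have hgsq : ∀ t : ℝ, 0 ≤ t → g t * g t = max (t - δ) 0 / t := fun t ht =>
    Real.mul_self_sqrt (div_nonneg (le_max_right _ _) ht)
  set gb := cfcₙ g b with hgb_def
  have hgb_sa : IsSelfAdjoint gb := IsSelfAdjoint.cfcₙ
  -- `gb * b * gb = posCut b δ`
  have hmul1 : cfcₙ (fun t : ℝ => t * g t) b = b * gb := by
    rw [cfcₙ_mul _ g b (by fun_prop) rfl hgc hg0, cfcₙ_id' ℝ b]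
  have hA : gb * b * gb = posCut b δ := by
    rw [mul_assoc, ← hmul1,
      ← cfcₙ_mul g _ b hgc hg0 (by fun_prop) (by simp [hg0])]
    refine cfcₙ_congr fun t ht => ?_
    have ht0 : 0 ≤ t := hqs t ht
    show g t * (t * g t) = max (t - δ) 0
    rcases eq_or_ne t 0 with rfl | htne
    · simp [hg0, hδ.le]
    · have : g t * (t * g t) = g t * g t * t := by ring
      rw [this, hgsq t ht0, div_mul_cancel₀ _ htne]
  -- `δ • (gb * gb) ≤ posCut b δ`
  have hsq : cfcₙ (fun t => g t * g t) b = gb * gb := cfcₙ_mul g g b hgc hg0 hgc hg0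
  have hB : δ • (gb * gb) ≤ posCut b δ := by
    rw [← hsq, ← cfcₙ_smul δ _ b (by fun_prop) (by simp [hg0])]
    refine cfcₙ_mono (fun t ht => ?_)
      (by fun_prop)
      (((continuous_id.sub continuous_const).max continuous_const).continuousOn)
      (by simp [hg0]) (by rw [zero_sub, max_eq_right (neg_nonpos.mpr hδ.le)])
    have ht0 : 0 ≤ t := hqs t ht
    show δ • (g t * g t) ≤ max (t - δ) 0
    rw [smul_eq_mul, hgsq t ht0]
    rcases le_or_gt t δ with htδ | htδ
    · rw [max_eq_right (by linarith : t - δ ≤ 0)]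
      simp
    · have htpos : 0 < t := hδ.trans htδ
      have hmax : max (t - δ) 0 = t - δ := max_eq_left (by linarith)
      rw [hmax]
      rw [div_eq_mul_inv]
      have h1 : δ * ((t - δ) * t⁻¹) ≤ t * ((t - δ) * t⁻¹) :=
        mul_le_mul_of_nonneg_right htδ.le
          (mul_nonneg (by linarith) (inv_nonneg.mpr htpos.le))
      calc δ * ((t - δ) * t⁻¹) ≤ t * ((t - δ) * t⁻¹) := h1
        _ = t - δ := by field_simp
  set c := posCut b δ with hc_def
  set d := w * c * star w with hd_def
  set ε := ‖a - d‖ with hε_def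
  have hε : 0 ≤ ε := norm_nonneg _
  set v₀ := w * gb with hv₀_def
  have hstar : star v₀ = gb * star w := by rw [hv₀_def, star_mul, hgb_sa.star_eq]
  have hv0b : v₀ * b * star v₀ = d := by
    rw [hstar, hv₀_def, hd_def, ← hA]
    noncomm_ring
  have hcd : δ • (v₀ * star v₀) ≤ d := by
    have h1 := star_right_conjugate_le_conjugate hB w
    have h2 : w * (δ • (gb * gb)) * star w = δ • (v₀ * star v₀) := by
      rw [hstar, hv₀_def, mul_smul_comm, smul_mul_assoc]
      congr 1
      noncomm_ring
    rw [h2] at h1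
    exact h1
  have hδsqrt : 0 < Real.sqrt δ := Real.sqrt_pos.mpr hδ
  have hnorm0 : ‖v₀‖ ≤ Real.sqrt ‖d‖ / Real.sqrt δ := by
    have h1 : ‖δ • (v₀ * star v₀)‖ ≤ ‖d‖ :=
      CStarAlgebra.norm_le_norm_of_nonneg_of_le
        (smul_nonneg hδ.le (mul_star_self_nonneg v₀)) hcd
    have h2 : ‖δ • (v₀ * star v₀)‖ = δ * (‖v₀‖ * ‖v₀‖) := by
      rw [norm_smul, Real.norm_of_nonneg hδ.le, CStarRing.norm_self_mul_star]
    have h3 : ‖v₀‖ * ‖v₀‖ ≤ ‖d‖ / δ := by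
      rw [le_div_iff₀ hδ]
      nlinarith [h1, h2]
    have h4 : ‖v₀‖ ≤ Real.sqrt (‖d‖ / δ) := by
      rw [show ‖d‖ / δ = Real.sqrt (‖d‖ / δ) * Real.sqrt (‖d‖ / δ) from
        (Real.mul_self_sqrt (div_nonneg (norm_nonneg d) hδ.le)).symm] at h3
      nlinarith [Real.sqrt_nonneg (‖d‖ / δ), norm_nonneg v₀, h3]
    rwa [Real.sqrt_div (norm_nonneg d)] at h4
  rcases le_or_gt ‖d‖ ‖a‖ with hda | hda
  · refine ⟨v₀, ?_, ?_⟩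
    · rw [hv0b]; linarith
    · refine hnorm0.trans ?_
      gcongr
  · have hd0 : 0 < ‖d‖ := (norm_nonneg a).trans_lt hda
    have hdsqrt : 0 < Real.sqrt ‖d‖ := Real.sqrt_pos.mpr hd0
    set t := Real.sqrt ‖a‖ / Real.sqrt ‖d‖ with ht_def
    have ht0 : 0 ≤ t := div_nonneg (Real.sqrt_nonneg _) (Real.sqrt_nonneg _)
    have ht2 : t * t = ‖a‖ / ‖d‖ := by
      rw [ht_def, div_mul_div_comm, Real.mul_self_sqrt (norm_nonneg a),
        Real.mul_self_sqrt (norm_nonneg d)]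
    have ht1 : t * t ≤ 1 := by
      rw [ht2, div_le_one hd0]; exact hda.le
    refine ⟨t • v₀, ?_, ?_⟩
    · have hcomp : (t • v₀) * b * star (t • v₀) = (t * t) • d := by
        rw [star_smul, star_trivial, smul_mul_assoc, smul_mul_assoc, mul_smul_comm,
          smul_smul, hv0b]
      rw [hcomp]
      have hsplit : a - (t * t) • d = (a - d) + (1 - t * t) • d := by
        rw [sub_smul, one_smul]; abel
      have h5 : ‖(1 - t * t) • d‖ = (1 - t * t) * ‖d‖ := by
        rw [norm_smul, Real.norm_of_nonneg (by linarith)]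
      have h6 : (1 - t * t) * ‖d‖ = ‖d‖ - ‖a‖ := by
        rw [ht2]; field_simp
      have h7 : ‖d‖ - ‖a‖ ≤ ε := by
        calc ‖d‖ - ‖a‖ ≤ ‖d - a‖ := norm_sub_norm_le d a
          _ = ε := by rw [hε_def, norm_sub_rev]
      calc ‖a - (t * t) • d‖ ≤ ‖a - d‖ + ‖(1 - t * t) • d‖ := by
            rw [hsplit]; exact norm_add_le _ _
        _ ≤ ε + ε := by rw [h5, h6]; exact add_le_add le_rfl h7
        _ = 2 * ε := by ring
    · have h8 : ‖t • v₀‖ = t * ‖v₀‖ := by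
        rw [norm_smul, Real.norm_of_nonneg ht0]
      rw [h8]
      calc t * ‖v₀‖ ≤ t * (Real.sqrt ‖d‖ / Real.sqrt δ) :=
            mul_le_mul_of_nonneg_left hnorm0 ht0
        _ = Real.sqrt ‖a‖ / Real.sqrt δ := by
            rw [ht_def]; field_simp

end Aux

/-- If `a ≾ (b - δ)₊` then the witnessing sequence can be chosen with
`‖v n‖ ≤ ‖a‖^(1/2) δ^(-1/2)`. -/
theorem stmt_0 {A : Type*} [NonUnitalCStarAlgebra A] [PartialOrder A] [StarOrderedRing A]
    (a b : A) (ha : 0 ≤ a) (hb : 0 ≤ b) (δ : ℝ) (hδ : 0 < δ)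
    (h : CuntzLE a (posCut b δ)) :
    ∃ v : ℕ → A, Tendsto (fun n => ‖a - v n * b * star (v n)‖) atTop (𝓝 0) ∧
      ∀ n, ‖v n‖ ≤ Real.sqrt ‖a‖ / Real.sqrt δ := by
  obtain ⟨w, hw⟩ := h
  choose v hv1 hv2 using fun n => key a b ha hb hδ (w n)
  refine ⟨v, ?_, hv2⟩
  have h2 : Tendsto (fun n => 2 * ‖a - w n * posCut b δ * star (w n)‖) atTop (𝓝 0) := by
    simpa using hw.const_mul 2
  exact squeeze_zero (fun n => norm_nonneg _) hv1 h2
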